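/- For every q ∈ (0,8) there exists c > 0 such that for all real a ∈ (1/4, 1/2) and b ∈ ℝ satisfying the ellipse equation q(a − 1/2)² + (16 − q) b² = 1, one has a² − b² > 0 and (1/2 − 2a + √(2(a² − b²))) / √(2(a² − b²)) ≥ c. -/
import Mathlib


open Set

/-- For each `q ∈ (0,8)` there is `c > 0` such that for all `a ∈ (1/4, 1/2)` and `b` on the
ellipse `q(a-1/2)² + (16-q)b² = 1`, one has `a² - b² > 0` and
`(1/2 - 2a + √(2(a²-b²)))/√(2(a²-b²)) ≥ c`. -/
theorem ellipse_uniform_bound (q : ℝ) (hq : q ∈ Ioo (0 : ℝ) 8) :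
    ∃ c : ℝ, 0 < c ∧
      ∀ a b : ℝ, a ∈ Ioo (1 / 4 : ℝ) (1 / 2) →
        q * (a - 1 / 2) ^ 2 + (16 - q) * b ^ 2 = 1 →
        0 < a ^ 2 - b ^ 2 ∧
          c ≤ (1 / 2 - 2 * a + Real.sqrt (2 * (a ^ 2 - b ^ 2))) /
            Real.sqrt (2 * (a ^ 2 - b ^ 2)) := by
  obtain ⟨hq0, hq8⟩ := hq
  set t : ℝ := (16 - q) / (2 * (12 - q)) with ht_def
  have h12 : (0:ℝ) < 12 - q := by linarith
  have ht0 : 0 ≤ t := div_nonneg (by linarith) (by linarith)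
  have ht1 : t < 1 := by
    rw [ht_def, div_lt_one (by linarith)]
    linarith
  have hst1 : Real.sqrt t < 1 := by
    have := Real.sqrt_lt_sqrt ht0 ht1
    simpa using this
  refine ⟨1 - Real.sqrt t, by linarith, ?_⟩
  intro a b ha heq
  obtain ⟨ha1, ha2⟩ := ha
  have key : 4 * (16 - q) * (a ^ 2 - b ^ 2) = (4 * a - 1) * (16 * a + 4 - q) := by
    linear_combination (-4) * heq
  have hpos : 0 < a ^ 2 - b ^ 2 := by nlinarith
  refine ⟨hpos, ?_⟩
  have hs : 0 < Real.sqrt (2 * (a ^ 2 - b ^ 2)) :=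
    Real.sqrt_pos.mpr (by linarith)
  rw [le_div_iff₀ hs]
  have h1 : (2 * a - 1 / 2) ^ 2 ≤ t * (2 * (a ^ 2 - b ^ 2)) := by
    rw [ht_def, div_mul_eq_mul_div, le_div_iff₀ (by linarith : (0:ℝ) < 2 * (12 - q))]
    nlinarith [mul_nonneg (mul_nonneg (by linarith : (0:ℝ) ≤ 8 - q)
      (by linarith : (0:ℝ) ≤ 2 - 4 * a)) (by linarith : (0:ℝ) ≤ 4 * a - 1)]
  have h2 : 2 * a - 1 / 2 ≤ Real.sqrt t * Real.sqrt (2 * (a ^ 2 - b ^ 2)) := by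
    have := Real.sqrt_le_sqrt h1
    rwa [Real.sqrt_sq (by linarith : (0:ℝ) ≤ 2 * a - 1 / 2),
      Real.sqrt_mul ht0] at this
  nlinarith [h2, hs]
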